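/- For all graphs G and H and all k ≥ 1, if G ≡_{C_{2k}} H, then G^1 ≡_{C_k} H^1. -/

import Mathlib

/-- The edges of `G`, oriented according to the linear order on the vertices. -/
def SubEdges {V : Type} [LinearOrder V] (G : SimpleGraph V) : Type :=
  {p : V × V // p.1 < p.2 ∧ G.Adj p.1 p.2}

/-- The vertex set of the `s`-subdivision of `G`: the original vertices together with
`s` new internal path vertices for each edge. -/
def SubdivVerts {V : Type} [LinearOrder V] (G : SimpleGraph V) (s : ℕ) : Type :=
  V ⊕ (SubEdges G × Fin s)

/-- The `s`-subdivision `G^s` of `G`: every edge of `G` is replaced by a path with `s`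
new internal vertices (for `s = 0` this is `G` itself). -/
def subdivision {V : Type} [LinearOrder V] (G : SimpleGraph V) (s : ℕ) :
    SimpleGraph (SubdivVerts G s) :=
  SimpleGraph.fromRel (fun x y =>
    match x, y with
    | Sum.inl u, Sum.inl v => s = 0 ∧ G.Adj u v
    | Sum.inl u, Sum.inr (e, j) => (u = e.1.1 ∧ (j : ℕ) = 0) ∨ (u = e.1.2 ∧ (j : ℕ) = s - 1)
    | Sum.inr (e, j), Sum.inr (e', j') => e = e' ∧ (j : ℕ) + 1 = (j' : ℕ)
    | Sum.inr _, Sum.inl _ => False)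

/-- Formulas of the `k`-variable fragment of first-order logic with counting quantifiers,
over the language of graphs. `count n i φ` is the counting quantifier `∃^{≥n} x_i φ`. -/
inductive CFormula (k : ℕ) : Type
  | eq : Fin k → Fin k → CFormula k
  | adj : Fin k → Fin k → CFormula k
  | not : CFormula k → CFormula k
  | and : CFormula k → CFormula k → CFormula k
  | count : ℕ → Fin k → CFormula k → CFormula k

/-- The free variables of a counting-logic formula. -/
def CFormula.freeVars {k : ℕ} : CFormula k → Finset (Fin k)
  | .eq i j => {i, j}
  | .adj i j => {i, j}
  | .not φ => φ.freeVars
  | .and φ ψ => φ.freeVars ∪ ψ.freeVars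
  | .count _ i φ => φ.freeVars.erase i

/-- Satisfaction of a counting-logic formula in the graph `G` under the assignment `a`. -/
def CSat {V : Type} (G : SimpleGraph V) {k : ℕ} : CFormula k → (Fin k → V) → Prop
  | .eq i j, a => a i = a j
  | .adj i j, a => G.Adj (a i) (a j)
  | .not φ, a => ¬ CSat G φ a
  | .and φ ψ, a => CSat G φ a ∧ CSat G ψ a
  | .count n i φ, a => n ≤ Set.ncard {u : V | CSat G φ (Function.update a i u)}

/-- `G ≡_{C_k} H` : the graphs `G` and `H` satisfy exactly the same sentences of the
`k`-variable fragment of first-order logic with counting. -/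
def CEquiv {V W : Type} (G : SimpleGraph V) (H : SimpleGraph W) (k : ℕ) : Prop :=
  ∀ φ : CFormula k, φ.freeVars = ∅ →
    ((∀ a : Fin k → V, CSat G φ a) ↔ (∀ a : Fin k → W, CSat H φ a))

attribute [reducible] SubdivVerts SubEdges

section Util
variable {V : Type} {k : ℕ}

lemma csat_eqOn (G : SimpleGraph V) (φ : CFormula k) (a a' : Fin k → V)
    (h : ∀ i ∈ φ.freeVars, a i = a' i) : CSat G φ a ↔ CSat G φ a' := by
  induction φ generalizing a a' with
  | eq i j =>
    simp only [CFormula.freeVars, Finset.mem_insert, Finset.mem_singleton] at h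
    simp [CSat, h i (Or.inl rfl), h j (Or.inr rfl)]
  | adj i j =>
    simp only [CFormula.freeVars, Finset.mem_insert, Finset.mem_singleton] at h
    simp [CSat, h i (Or.inl rfl), h j (Or.inr rfl)]
  | not φ ih =>
    simp only [CFormula.freeVars] at h
    simp [CSat, ih a a' h]
  | and φ ψ ih1 ih2 =>
    simp only [CFormula.freeVars, Finset.mem_union] at h
    simp only [CSat]
    rw [ih1 a a' (fun i hi => h i (Or.inl hi)), ih2 a a' (fun i hi => h i (Or.inr hi))]
  | count n i φ ih =>
    simp only [CFormula.freeVars, Finset.mem_erase] at h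
    simp only [CSat]
    have : {u : V | CSat G φ (Function.update a i u)}
        = {u : V | CSat G φ (Function.update a' i u)} := by
      ext u
      simp only [Set.mem_setOf_eq]
      refine ih _ _ (fun j hj => ?_)
      by_cases hji : j = i
      · subst hji; simp
      · simp [Function.update_of_ne hji, h j ⟨hji, hj⟩]
    rw [this]

/-- A true sentence (with no free variables). -/
def FTrue (v : Fin k) : CFormula k := .count 0 v (.eq v v)

def FFalse (v : Fin k) : CFormula k := .not (FTrue v)

def FOr (φ ψ : CFormula k) : CFormula k := .not (.and (.not φ) (.not ψ))

def FBigOr (v : Fin k) : List (CFormula k) → CFormula k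
  | [] => FFalse v
  | φ :: l => FOr φ (FBigOr v l)

def FBigAnd (v : Fin k) : List (CFormula k) → CFormula k
  | [] => FTrue v
  | φ :: l => .and φ (FBigAnd v l)

@[simp] lemma csat_FTrue (G : SimpleGraph V) (v : Fin k) (a : Fin k → V) :
    CSat G (FTrue v) a := by simp [FTrue, CSat]

@[simp] lemma csat_FFalse (G : SimpleGraph V) (v : Fin k) (a : Fin k → V) :
    ¬ CSat G (FFalse v) a := by simp [FFalse, CSat]

@[simp] lemma csat_FOr (G : SimpleGraph V) (φ ψ : CFormula k) (a : Fin k → V) :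
    CSat G (FOr φ ψ) a ↔ CSat G φ a ∨ CSat G ψ a := by
  simp only [FOr, CSat]; tauto

lemma csat_FBigOr (G : SimpleGraph V) (v : Fin k) (l : List (CFormula k)) (a : Fin k → V) :
    CSat G (FBigOr v l) a ↔ ∃ φ ∈ l, CSat G φ a := by
  induction l with
  | nil => simp [FBigOr]
  | cons φ l ih => simp [FBigOr, ih]

lemma csat_FBigAnd (G : SimpleGraph V) (v : Fin k) (l : List (CFormula k)) (a : Fin k → V) :
    CSat G (FBigAnd v l) a ↔ ∀ φ ∈ l, CSat G φ a := by
  induction l with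
  | nil => simp [FBigAnd]
  | cons φ l ih => simp [FBigAnd, CSat, ih]

@[simp] lemma fv_FTrue (v : Fin k) : (FTrue v).freeVars = ∅ := by
  simp [FTrue, CFormula.freeVars]

@[simp] lemma fv_FFalse (v : Fin k) : (FFalse v).freeVars = ∅ := by
  simp [FFalse, CFormula.freeVars]

@[simp] lemma fv_FOr (φ ψ : CFormula k) : (FOr φ ψ).freeVars = φ.freeVars ∪ ψ.freeVars := by
  simp [FOr, CFormula.freeVars]

lemma fv_FBigOr (v : Fin k) (l : List (CFormula k)) (s : Finset (Fin k))
    (h : ∀ φ ∈ l, φ.freeVars ⊆ s) : (FBigOr v l).freeVars ⊆ s := by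
  induction l with
  | nil => simp [FBigOr]
  | cons φ l ih =>
    simp only [FBigOr, fv_FOr, Finset.union_subset_iff]
    exact ⟨h φ (by simp), ih (fun ψ hψ => h ψ (by simp [hψ]))⟩

lemma fv_FBigAnd (v : Fin k) (l : List (CFormula k)) (s : Finset (Fin k))
    (h : ∀ φ ∈ l, φ.freeVars ⊆ s) : (FBigAnd v l).freeVars ⊆ s := by
  induction l with
  | nil => simp [FBigAnd]
  | cons φ l ih =>
    simp only [FBigAnd, CFormula.freeVars, Finset.union_subset_iff]
    exact ⟨h φ (by simp), ih (fun ψ hψ => h ψ (by simp [hψ]))⟩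

end Util
section Counting

variable {α : Type} [Fintype α]

lemma sum_eq_sum_card (F : α → ℕ) (N : ℕ) (hN : ∀ u, F u ≤ N) :
    ∑ u, F u = ∑ j ∈ Finset.Ioc 0 N, (Finset.univ.filter (fun u => j ≤ F u)).card := by
  have h1 : ∀ j, (Finset.univ.filter (fun u => j ≤ F u)).card
      = ∑ u, if j ≤ F u then 1 else 0 := fun j => Finset.card_filter _ _
  simp only [h1]
  rw [Finset.sum_comm]
  refine Finset.sum_congr rfl (fun u _ => ?_)
  rw [← Finset.card_filter]
  have h2 : (Finset.Ioc 0 N).filter (fun j => j ≤ F u) = Finset.Ioc 0 (F u) := by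
    ext j
    simp only [Finset.mem_filter, Finset.mem_Ioc]
    have := hN u; omega
  rw [h2, Nat.card_Ioc]
  omega

lemma card_le_of_fin_subset {m : ℕ} (s : Finset (Fin m)) (t : Fin m) (h : ∀ x ∈ s, x ≤ t) :
    s.card ≤ (t : ℕ) + 1 := by
  have h1 : s.card ≤ (Finset.range ((t : ℕ) + 1)).card := by
    exact Finset.card_le_card_of_injOn (fun x => (x : ℕ))
      (fun x hx => by simp only [Finset.mem_coe, Finset.mem_range]; exact Nat.lt_succ_of_le (h x hx))
      (fun x _ y _ hxy => Fin.val_injective hxy)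
  simpa using h1

lemma card_filter_val_lt (m r : ℕ) :
    (Finset.univ.filter (fun t : Fin m => (t : ℕ) < r)).card = min r m := by
  rcases le_or_gt m r with hmr | hmr
  · have h1 : (Finset.univ.filter (fun t : Fin m => (t : ℕ) < r)) = Finset.univ := by
      ext t; have := t.isLt; simp; omega
    rw [h1]
    simp [min_eq_right hmr]
  · have h1 : (Finset.univ.filter (fun t : Fin m => (t : ℕ) < r)) = Finset.Iio ⟨r, hmr⟩ := by
      ext t; simp [Finset.mem_Iio, Fin.lt_def]
    rw [h1, Fin.card_Iio]
    simp [min_eq_left (le_of_lt hmr)]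

/-- The key combinatorial lemma: `m ≤ ∑ F` can be characterized by a finite family of
nested threshold conditions. -/
lemma sum_count_trick (F : α → ℕ) (m : ℕ) :
    (m ≤ ∑ u, F u) ↔ ∃ aseq : Fin m → Fin (m + 1),
      (m ≤ ∑ t, ((aseq t : ℕ))) ∧
      ∀ t : Fin m, (aseq t : ℕ) ≠ 0 →
        (t : ℕ) + 1 ≤ (Finset.univ.filter (fun u => (aseq t : ℕ) ≤ F u)).card := by
  classical
  set c : ℕ → ℕ := fun j => (Finset.univ.filter (fun u => j ≤ F u)).card with hc
  have hanti : ∀ {j j'}, j ≤ j' → c j' ≤ c j := by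
    intro j j' hj
    apply Finset.card_le_card
    intro u hu
    simp only [hc, Finset.mem_filter] at hu ⊢
    exact ⟨hu.1, le_trans hj hu.2⟩
  set N : ℕ := m + ∑ u, F u with hN
  have hFN : ∀ u, F u ≤ N := by
    intro u
    have : F u ≤ ∑ u, F u := Finset.single_le_sum (fun i _ => Nat.zero_le _) (Finset.mem_univ u)
    omega
  have hsumc : ∑ u, F u = ∑ j ∈ Finset.Ioc 0 N, c j := sum_eq_sum_card F N hFN
  constructor
  · -- construct the sequence
    intro hm
    refine ⟨fun t => ⟨((Finset.Ioc 0 m).filter (fun j => (t : ℕ) + 1 ≤ c j)).card, ?_⟩, ?_, ?_⟩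
    · have h3 : ((Finset.Ioc 0 m).filter (fun j => (t : ℕ) + 1 ≤ c j)).card
          ≤ (Finset.Ioc 0 m).card := Finset.card_le_card (Finset.filter_subset _ _)
      simp only [Nat.card_Ioc] at h3
      omega
    · -- m ≤ ∑ t, a t
      have key : ∑ t : Fin m, ((Finset.Ioc 0 m).filter (fun j => (t : ℕ) + 1 ≤ c j)).card
          = ∑ j ∈ Finset.Ioc 0 m, min (c j) m := by
        have h4 : ∀ t : Fin m, ((Finset.Ioc 0 m).filter (fun j => (t : ℕ) + 1 ≤ c j)).card
            = ∑ j ∈ Finset.Ioc 0 m, if (t : ℕ) + 1 ≤ c j then 1 else 0 :=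
          fun t => Finset.card_filter _ _
        simp only [h4]
        rw [Finset.sum_comm]
        refine Finset.sum_congr rfl (fun j _ => ?_)
        rw [← Finset.card_filter]
        have h5 : (Finset.univ.filter (fun t : Fin m => (t : ℕ) + 1 ≤ c j))
            = (Finset.univ.filter (fun t : Fin m => (t : ℕ) < min (c j) m)) := by
          ext t
          simp only [Finset.mem_filter, Finset.mem_univ, true_and, lt_min_iff]
          have := t.isLt
          omega
        rw [h5, card_filter_val_lt]
        omega
      simp only
      rw [key]
      by_cases hbig : ∃ j ∈ Finset.Ioc 0 m, m ≤ c j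
      · obtain ⟨j0, hj0, hcj0⟩ := hbig
        calc m = min (c j0) m := (min_eq_right hcj0).symm
        _ ≤ ∑ j ∈ Finset.Ioc 0 m, min (c j) m :=
          Finset.single_le_sum (f := fun j => min (c j) m) (fun i _ => Nat.zero_le _) hj0
      · push_neg at hbig
        have hmin : ∑ j ∈ Finset.Ioc 0 m, min (c j) m = ∑ j ∈ Finset.Ioc 0 m, c j :=
          Finset.sum_congr rfl (fun j hj => min_eq_left (le_of_lt (hbig j hj)))
        rw [hmin]
        by_cases hz : ∃ j ∈ Finset.Ioc 0 m, c j = 0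
        · obtain ⟨j0, hj0, hcj0⟩ := hz
          simp only [Finset.mem_Ioc] at hj0
          have hmN : m ≤ N := by omega
          have hsplit : ∑ j ∈ Finset.Ioc 0 N, c j
              = ∑ j ∈ Finset.Ioc 0 m, c j + ∑ j ∈ Finset.Ioc m N, c j := by
            rw [← Finset.sum_union]
            · rw [Finset.Ioc_union_Ioc_eq_Ioc (Nat.zero_le m) hmN]
            · rw [Finset.disjoint_left]
              intro x hx1 hx2
              simp only [Finset.mem_Ioc] at hx1 hx2
              omega
          have htail : ∑ j ∈ Finset.Ioc m N, c j = 0 := by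
            apply Finset.sum_eq_zero
            intro j hj
            simp only [Finset.mem_Ioc] at hj
            have : c j ≤ c j0 := hanti (by omega)
            omega
          omega
        · push_neg at hz
          calc m = ∑ _j ∈ Finset.Ioc 0 m, 1 := by simp [Nat.card_Ioc]
          _ ≤ ∑ j ∈ Finset.Ioc 0 m, c j :=
            Finset.sum_le_sum (fun j hj => Nat.one_le_iff_ne_zero.mpr (hz j hj))
    · -- the threshold condition
      intro t hat
      set s := (Finset.Ioc 0 m).filter (fun j => (t : ℕ) + 1 ≤ c j) with hs
      simp only at hat
      have hcard : 0 < s.card := Nat.pos_of_ne_zero hat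
      have hmem : s.card ∈ s := by
        by_contra hns
        by_cases hex : ∃ x ∈ s, s.card ≤ x
        · obtain ⟨x, hxs, hx⟩ := hex
          have hxs' := hxs
          simp only [hs, Finset.mem_filter, Finset.mem_Ioc] at hxs'
          have : s.card ∈ s := by
            simp only [hs, Finset.mem_filter, Finset.mem_Ioc]
            exact ⟨⟨hcard, le_trans hx hxs'.1.2⟩, le_trans hxs'.2 (hanti hx)⟩
          exact hns this
        · push_neg at hex
          have hsub : s ⊆ Finset.Ioc 0 (s.card - 1) := by
            intro x hxs
            have h1 := hex x hxs
            simp only [hs, Finset.mem_filter, Finset.mem_Ioc] at hxs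
            simp only [Finset.mem_Ioc]
            omega
          have := Finset.card_le_card hsub
          simp only [Nat.card_Ioc] at this
          omega
      simp only [hs, Finset.mem_filter, Finset.mem_Ioc] at hmem
      exact hmem.2
  · -- soundness
    rintro ⟨aseq, hsum, hthr⟩
    have key : ∀ j ∈ Finset.Ioc 0 N,
        (Finset.univ.filter (fun t : Fin m => j ≤ (aseq t : ℕ))).card ≤ c j := by
      intro j hj
      simp only [Finset.mem_Ioc] at hj
      set Tj := Finset.univ.filter (fun t : Fin m => j ≤ (aseq t : ℕ)) with hTj
      rcases Finset.eq_empty_or_nonempty Tj with he | hne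
      · simp [he]
      · obtain ⟨tmax, htmax, hmax⟩ := Finset.exists_max_image Tj id hne
        have h1 : Tj.card ≤ (tmax : ℕ) + 1 := card_le_of_fin_subset Tj tmax hmax
        have htm : j ≤ (aseq tmax : ℕ) := by
          simp only [hTj, Finset.mem_filter] at htmax
          exact htmax.2
        have h2 : (tmax : ℕ) + 1 ≤ c (aseq tmax : ℕ) := hthr tmax (by omega)
        have h3 : c (aseq tmax : ℕ) ≤ c j := hanti htm
        omega
    have h4 : ∑ t : Fin m, (aseq t : ℕ) ≤ ∑ j ∈ Finset.Ioc 0 N, c j := by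
      have e1 : ∑ t : Fin m, (aseq t : ℕ)
          = ∑ j ∈ Finset.Ioc 0 N,
            (Finset.univ.filter (fun t : Fin m => j ≤ (aseq t : ℕ))).card := by
        apply sum_eq_sum_card
        intro t
        have := (aseq t).isLt
        omega
      rw [e1]
      exact Finset.sum_le_sum key
    omega

end Counting
section Subdiv

variable {V : Type} [LinearOrder V] {G : SimpleGraph V}

noncomputable instance instFintypeSubEdges [Fintype V] (G : SimpleGraph V) :
    Fintype (SubEdges G) := by
  unfold SubEdges
  classical
  exact Subtype.fintype _

noncomputable instance instFintypeSubdivVerts [Fintype V] (G : SimpleGraph V) (s : ℕ) :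
    Fintype (SubdivVerts G s) := by
  unfold SubdivVerts
  infer_instance

instance instIsEmptySubdivVerts [IsEmpty V] (G : SimpleGraph V) (s : ℕ) :
    IsEmpty (SubdivVerts G s) := by
  unfold SubdivVerts SubEdges
  refine ⟨fun x => ?_⟩
  rcases x with u | ⟨⟨⟨p, q⟩, _⟩, _⟩
  · exact IsEmpty.elim ‹_› u
  · exact IsEmpty.elim ‹_› p

/-- The edge of `SubEdges G` corresponding to an adjacent pair. -/
def mkEdge {u v : V} (h : G.Adj u v) : SubEdges G :=
  if huv : u < v then ⟨(u, v), huv, h⟩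
  else ⟨(v, u), (not_lt.1 huv).lt_of_ne h.ne', h.symm⟩

lemma mkEdge_val {u v : V} (h : G.Adj u v) :
    (mkEdge h).1 = (u, v) ∨ (mkEdge h).1 = (v, u) := by
  unfold mkEdge; split_ifs <;> simp

lemma eq_mkEdge_iff {u v : V} (e : SubEdges G) (h : G.Adj u v) :
    e = mkEdge h ↔ (e.1 = (u, v) ∨ e.1 = (v, u)) := by
  constructor
  · rintro rfl; exact mkEdge_val h
  · intro he
    apply Subtype.ext
    unfold mkEdge; split_ifs with huv
    · rcases he with he | he
      · exact he
      · exfalso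
        have h2 := e.2.1
        rw [he] at h2
        exact absurd huv (asymm h2)
    · rcases he with he | he
      · exfalso
        have h2 := e.2.1
        rw [he] at h2
        exact absurd h2 huv
      · exact he

/-- The internal vertex of an edge in the 1-subdivision. -/
def edgeVert {G : SimpleGraph V} (e : SubEdges G) : SubdivVerts G 1 := Sum.inr (e, 0)

lemma edgeVert_injective {G : SimpleGraph V} :
    Function.Injective (edgeVert (G := G)) := by
  intro a b hab
  exact (Prod.ext_iff.1 (Sum.inr.inj hab)).1

lemma fin_one_eq_zero (j : Fin 1) : j = 0 := Subsingleton.elim _ _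

lemma subdiv_adj_iff (x y : SubdivVerts G 1) :
    (subdivision G 1).Adj x y ↔
      (∃ u e, x = Sum.inl u ∧ y = Sum.inr (e, 0) ∧ (u = e.1.1 ∨ u = e.1.2)) ∨
      (∃ u e, y = Sum.inl u ∧ x = Sum.inr (e, 0) ∧ (u = e.1.1 ∨ u = e.1.2)) := by
  unfold subdivision
  rw [SimpleGraph.fromRel_adj]
  rcases x with u | ⟨e, j⟩ <;> rcases y with v | ⟨e', j'⟩
  · simp
  · rw [fin_one_eq_zero j']
    have hj' : ((0 : Fin 1) : ℕ) = 0 := rfl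
    simp [hj']
  · rw [fin_one_eq_zero j]
    have hj : ((0 : Fin 1) : ℕ) = 0 := rfl
    simp [hj]
  · rw [fin_one_eq_zero j, fin_one_eq_zero j']
    simp

end Subdiv
section Count2

lemma ncard_setOf_eq_filter_card {α : Type} [Fintype α] (p : α → Prop) [DecidablePred p] :
    {x | p x}.ncard = (Finset.univ.filter p).card := by
  rw [Set.ncard_eq_toFinset_card', Set.toFinset_setOf]

variable {V : Type} [LinearOrder V] [Fintype V] {G : SimpleGraph V}

lemma ncard_subdiv_split (S : Set (SubdivVerts G 1)) :
    S.ncard = {u : V | Sum.inl u ∈ S}.ncard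
      + {e : SubEdges G | edgeVert e ∈ S}.ncard := by
  classical
  set S1 := {u : V | Sum.inl u ∈ S} with hS1
  set S2 := {e : SubEdges G | edgeVert e ∈ S} with hS2
  have hinlne : ∀ (u : V) (e : SubEdges G), (Sum.inl u : SubdivVerts G 1) ≠ edgeVert e := by
    intro u e h
    exact absurd h (by simp [edgeVert])
  have hS : S = Sum.inl '' S1 ∪ edgeVert '' S2 := by
    rw [hS1, hS2]
    ext x
    rcases x with u | ⟨e, j⟩
    · simp only [Set.mem_union, Set.mem_image, Set.mem_setOf_eq]
      constructor
      · intro hx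
        exact Or.inl ⟨u, hx, rfl⟩
      · rintro (⟨w, hw, hwu⟩ | ⟨e', _, he⟩)
        · obtain rfl := Sum.inl.inj hwu
          exact hw
        · exact absurd he.symm (hinlne u e')
    · rw [fin_one_eq_zero j]
      simp only [Set.mem_union, Set.mem_image, Set.mem_setOf_eq]
      constructor
      · intro hx
        right
        exact ⟨e, hx, rfl⟩
      · rintro (⟨u, _, hu⟩ | ⟨e', he', hee⟩)
        · exact absurd hu (hinlne u e)
        · obtain rfl : e' = e := edgeVert_injective hee
          exact he'
  have hdisj : Disjoint (Sum.inl '' S1) (edgeVert '' S2) := by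
    rw [Set.disjoint_left]
    rintro x ⟨u, _, rfl⟩ ⟨e, _, he⟩
    exact hinlne u e he.symm
  rw [hS, Set.ncard_union_eq hdisj (Set.toFinite _) (Set.toFinite _),
    Set.ncard_image_of_injective _ Sum.inl_injective,
    Set.ncard_image_of_injective _ edgeVert_injective]

lemma sum_ncard_pairs (Q : SubEdges G → Prop) :
    ∑ u : V, {v : V | ∃ h : G.Adj u v, Q (mkEdge h)}.ncard
      = 2 * {e : SubEdges G | Q e}.ncard := by
  classical
  set Pf : Finset (V × V) :=
    Finset.univ.filter (fun p => ∃ h : G.Adj p.1 p.2, Q (mkEdge h)) with hPf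
  set Ef : Finset (SubEdges G) := Finset.univ.filter (fun e => Q e) with hEf
  -- step 1 : LHS = Pf.card
  have step1 : ∑ u : V, {v : V | ∃ h : G.Adj u v, Q (mkEdge h)}.ncard = Pf.card := by
    rw [Finset.card_eq_sum_card_fiberwise
      (f := Prod.fst) (t := Finset.univ) (fun p _ => Finset.mem_univ _)]
    refine Finset.sum_congr rfl (fun u _ => ?_)
    rw [ncard_setOf_eq_filter_card]
    apply Finset.card_bij' (fun v _ => ((u, v) : V × V)) (fun p _ => p.2)
    · intro v hv
      simp only [hPf, Finset.mem_filter, Finset.mem_univ, true_and, and_true] at hv ⊢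
      exact hv
    · intro p hp
      simp only [hPf, Finset.mem_filter, Finset.mem_univ, true_and] at hp ⊢
      obtain ⟨⟨hadj, hQ⟩, hfst⟩ := hp
      subst hfst
      exact ⟨hadj, hQ⟩
    · intro v hv; rfl
    · intro p hp
      simp only [hPf, Finset.mem_filter, Finset.mem_univ, true_and] at hp
      obtain ⟨-, hfst⟩ := hp
      exact Prod.ext hfst.symm rfl
  -- step 2 : Pf.card = 2 * Ef.card
  set g : V × V → Option (SubEdges G) :=
    fun p => if h : G.Adj p.1 p.2 then some (mkEdge h) else none with hg
  have step2 : Pf.card = 2 * Ef.card := by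
    rw [Finset.card_eq_sum_card_fiberwise (f := g) (t := Ef.image some)
      (by
        intro p hp
        simp only [hPf, Finset.mem_coe, Finset.mem_filter, Finset.mem_univ, true_and] at hp
        obtain ⟨hadj, hQ⟩ := hp
        simp only [hg, dif_pos hadj, Finset.mem_coe, Finset.mem_image]
        exact ⟨mkEdge hadj, by simp [hEf, hQ], rfl⟩)]
    rw [Finset.sum_image (by intro x _ y _ hxy; exact Option.some.inj hxy)]
    have hfib : ∀ e ∈ Ef, (Pf.filter (fun p => g p = some e)).card = 2 := by
      intro e he
      simp only [hEf, Finset.mem_filter, Finset.mem_univ, true_and] at he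
      have hlt := e.2.1
      have hadj := e.2.2
      have hfeq : Pf.filter (fun p => g p = some e)
          = {(e.1.1, e.1.2), (e.1.2, e.1.1)} := by
        ext p
        simp only [Finset.mem_filter, Finset.mem_insert, Finset.mem_singleton,
          hPf, Finset.mem_univ, true_and]
        constructor
        · rintro ⟨⟨h1, _⟩, h2⟩
          rw [hg] at h2
          simp only [dif_pos h1] at h2
          have h3 : e = mkEdge h1 := (Option.some.inj h2).symm
          rw [eq_mkEdge_iff] at h3
          rcases h3 with h3 | h3
          · left; rw [h3]
          · right; rw [h3]
        · rintro (rfl | rfl)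
          · have hadj' : G.Adj (e.1.1, e.1.2).1 (e.1.1, e.1.2).2 := hadj
            refine ⟨⟨hadj', ?_⟩, ?_⟩
            · have : mkEdge hadj' = e := by
                symm; rw [eq_mkEdge_iff]; left; rfl
              rw [this]; exact he
            · rw [hg]
              simp only [dif_pos hadj']
              congr 1
              symm; rw [eq_mkEdge_iff]; left; rfl
          · have hadj' : G.Adj (e.1.2, e.1.1).1 (e.1.2, e.1.1).2 := hadj.symm
            refine ⟨⟨hadj', ?_⟩, ?_⟩
            · have : mkEdge hadj' = e := by
                symm; rw [eq_mkEdge_iff]; right; rfl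
              rw [this]; exact he
            · rw [hg]
              simp only [dif_pos hadj']
              congr 1
              symm; rw [eq_mkEdge_iff]; right; rfl
      rw [hfeq]
      rw [Finset.card_insert_of_notMem, Finset.card_singleton]
      simp only [Finset.mem_singleton, Prod.mk.injEq]
      intro ⟨h1, _⟩
      exact absurd h1 (ne_of_lt hlt)
    rw [Finset.sum_congr rfl hfib, Finset.sum_const, smul_eq_mul, mul_comm]
  rw [step1, step2, ncard_setOf_eq_filter_card]

end Count2
section Trans

/-- first copy of a variable -/
def lo {k : ℕ} (i : Fin k) : Fin (2 * k) := ⟨i.val, by have := i.isLt; omega⟩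
/-- second copy of a variable -/
def hi {k : ℕ} (i : Fin k) : Fin (2 * k) := ⟨i.val + k, by have := i.isLt; omega⟩

lemma lo_inj {k : ℕ} {i j : Fin k} (h : lo i = lo j) : i = j := by
  simp only [lo, Fin.mk.injEq] at h
  exact Fin.ext h

lemma hi_inj {k : ℕ} {i j : Fin k} (h : hi i = hi j) : i = j := by
  simp only [hi, Fin.mk.injEq] at h
  exact Fin.ext (by omega)

lemma lo_ne_hi {k : ℕ} (i j : Fin k) : lo i ≠ hi j := by
  simp only [lo, hi, ne_eq, Fin.mk.injEq]
  have := i.isLt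
  omega

/-- All threshold sequences used in the pair-counting translation. -/
noncomputable def seqList (m : ℕ) : List (Fin m → Fin (m + 1)) :=
  (Finset.univ.filter (fun aseq : Fin m → Fin (m + 1) => m ≤ ∑ t, ((aseq t : ℕ)))).toList

lemma mem_seqList {m : ℕ} (aseq : Fin m → Fin (m + 1)) :
    aseq ∈ seqList m ↔ m ≤ ∑ t, ((aseq t : ℕ)) := by
  simp [seqList]

/-- Translation of a counting quantifier over the internal edge-vertices. -/
noncomputable def trPairs {k : ℕ} (i : Fin k) (m : ℕ) (ψ : CFormula (2 * k)) : CFormula (2 * k) :=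
  FBigOr (lo i) ((seqList m).map (fun aseq =>
    FBigAnd (lo i) ((List.finRange m).map (fun (t : Fin m) =>
      if (aseq t : ℕ) = 0 then FTrue (lo i)
      else .count ((t : ℕ) + 1) (lo i) (.count ((aseq t : ℕ)) (hi i) ψ)))))

/-- The translation of a `C_k` formula about `G¹` into a `C_{2k}` formula about `G`. -/
noncomputable def trC {k : ℕ} : CFormula k → CFormula (2 * k)
  | .eq i j => FOr
      (.and (.eq (lo i) (hi i)) (.and (.eq (lo j) (hi j)) (.eq (lo i) (lo j))))
      (.and (.not (.eq (lo i) (hi i))) (.and (.not (.eq (lo j) (hi j)))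
        (FOr (.and (.eq (lo i) (lo j)) (.eq (hi i) (hi j)))
             (.and (.eq (lo i) (hi j)) (.eq (hi i) (lo j))))))
  | .adj i j => FOr
      (.and (.eq (lo i) (hi i)) (.and (.not (.eq (lo j) (hi j)))
        (FOr (.eq (lo i) (lo j)) (.eq (lo i) (hi j)))))
      (.and (.eq (lo j) (hi j)) (.and (.not (.eq (lo i) (hi i)))
        (FOr (.eq (lo j) (lo i)) (.eq (lo j) (hi i)))))
  | .not φ => .not (trC φ)
  | .and φ ψ => .and (trC φ) (trC ψ)
  | .count n i φ => FBigOr (lo i) ((List.range (n + 1)).map (fun n1 =>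
      .and (.count n1 (lo i) (.count 1 (hi i) (.and (.eq (lo i) (hi i)) (trC φ))))
           (trPairs i (2 * (n - n1)) (.and (.adj (lo i) (hi i)) (trC φ)))))

lemma erase_erase_subset {k : ℕ} (i : Fin k) (F : Finset (Fin (2 * k))) (s : Finset (Fin k))
    (hF : F ⊆ s.image lo ∪ s.image hi) :
    ((({lo i, hi i} ∪ F).erase (hi i)).erase (lo i))
      ⊆ (s.erase i).image lo ∪ (s.erase i).image hi := by
  intro x hx
  simp only [Finset.mem_erase, Finset.mem_union, Finset.mem_insert,
    Finset.mem_singleton] at hx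
  obtain ⟨hx1, hx2, ((h | h) | h)⟩ := hx
  · exact absurd h hx1
  · exact absurd h hx2
  · have := hF h
    simp only [Finset.mem_union, Finset.mem_image, Finset.mem_erase] at this ⊢
    rcases this with ⟨j, hj, rfl⟩ | ⟨j, hj, rfl⟩
    · exact Or.inl ⟨j, ⟨fun hji => hx1 (by rw [hji]), hj⟩, rfl⟩
    · exact Or.inr ⟨j, ⟨fun hji => hx2 (by rw [hji]), hj⟩, rfl⟩

lemma fv_trans {k : ℕ} (φ : CFormula k) :
    (trC φ).freeVars ⊆ φ.freeVars.image lo ∪ φ.freeVars.image hi := by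
  induction φ with
  | eq i j =>
    intro x hx
    simp only [trC, fv_FOr, CFormula.freeVars, Finset.mem_union, Finset.mem_insert,
      Finset.mem_singleton, Finset.mem_image] at hx ⊢
    aesop
  | adj i j =>
    intro x hx
    simp only [trC, fv_FOr, CFormula.freeVars, Finset.mem_union, Finset.mem_insert,
      Finset.mem_singleton, Finset.mem_image] at hx ⊢
    aesop
  | not φ ih =>
    simpa [trC, CFormula.freeVars] using ih
  | and φ ψ ih1 ih2 =>
    simp only [trC, CFormula.freeVars, Finset.image_union]
    intro x hx
    rcases Finset.mem_union.1 hx with h | h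
    · have := ih1 h
      simp only [Finset.mem_union] at this ⊢
      tauto
    · have := ih2 h
      simp only [Finset.mem_union] at this ⊢
      tauto
  | count n i φ ih =>
    simp only [trC, CFormula.freeVars]
    apply fv_FBigOr
    intro χ hχ
    simp only [List.mem_map] at hχ
    obtain ⟨n1, -, rfl⟩ := hχ
    simp only [CFormula.freeVars]
    apply Finset.union_subset
    · exact erase_erase_subset i _ _ ih
    · apply fv_FBigOr
      intro χ' hχ'
      simp only [trPairs, List.mem_map] at hχ'
      obtain ⟨aseq, -, rfl⟩ := hχ'
      apply fv_FBigAnd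
      intro χ'' hχ''
      simp only [List.mem_map] at hχ''
      obtain ⟨t, -, rfl⟩ := hχ''
      by_cases h0 : (aseq t : ℕ) = 0
      · simp [h0]
      · simp only [h0, if_false, CFormula.freeVars]
        exact erase_erase_subset i _ _ ih

end Trans
section Good

variable {V : Type} [LinearOrder V] {G : SimpleGraph V} {k : ℕ}

lemma mkEdge_eq_mkEdge_iff {u v u' v' : V} (h : G.Adj u v) (h' : G.Adj u' v') :
    mkEdge h = mkEdge h' ↔ (u = u' ∧ v = v') ∨ (u = v' ∧ v = u') := by
  rw [eq_mkEdge_iff (mkEdge h) h']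
  rcases mkEdge_val h with hv | hv <;> rw [hv] <;> simp [Prod.ext_iff] <;> tauto

lemma mkEdge_endpoints {u' v' u : V} (h : G.Adj u' v') :
    (u = (mkEdge h).1.1 ∨ u = (mkEdge h).1.2) ↔ (u = u' ∨ u = v') := by
  rcases mkEdge_val h with hv | hv <;> rw [hv] <;> simp <;> tauto

lemma subdiv_adj_inl_edge (u : V) (e : SubEdges G) :
    (subdivision G 1).Adj (Sum.inl u) (edgeVert e) ↔ u = e.1.1 ∨ u = e.1.2 := by
  rw [subdiv_adj_iff]
  constructor
  · rintro (⟨u', e', h1, h2, h3⟩ | ⟨u', e', h1, h2, h3⟩)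
    · obtain rfl := Sum.inl.inj h1
      obtain rfl : e = e' := (Prod.ext_iff.1 (Sum.inr.inj h2)).1
      exact h3
    · exact absurd h2 (by simp)
  · intro h
    exact Or.inl ⟨u, e, rfl, rfl, h⟩

lemma subdiv_adj_edge_inl (u : V) (e : SubEdges G) :
    (subdivision G 1).Adj (edgeVert e) (Sum.inl u) ↔ u = e.1.1 ∨ u = e.1.2 := by
  rw [(subdivision G 1).adj_comm, subdiv_adj_inl_edge]

lemma subdiv_not_adj_inl_inl (u v : V) :
    ¬ (subdivision G 1).Adj (Sum.inl u) (Sum.inl v) := by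
  rw [subdiv_adj_iff]
  rintro (⟨u', e', h1, h2, h3⟩ | ⟨u', e', h1, h2, h3⟩) <;> exact absurd h2 (by simp)

lemma subdiv_not_adj_edge_edge (e e' : SubEdges G) :
    ¬ (subdivision G 1).Adj (edgeVert e) (edgeVert e') := by
  rw [subdiv_adj_iff]
  rintro (⟨u', e'', h1, h2, h3⟩ | ⟨u', e'', h1, h2, h3⟩) <;> exact absurd h1 (by simp [edgeVert])

/-- `b` encodes the assignment `a` into pairs of `G`-vertices. -/
def GoodPair (G : SimpleGraph V) (a : Fin k → SubdivVerts G 1) (b : Fin (2 * k) → V) : Prop :=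
  ∀ i : Fin k, (b (lo i) = b (hi i) ∧ a i = Sum.inl (b (lo i)))
    ∨ (∃ h : G.Adj (b (lo i)) (b (hi i)), a i = edgeVert (mkEdge h))

lemma update2_lo (b : Fin (2 * k) → V) (i : Fin k) (u v : V) :
    (Function.update (Function.update b (lo i) u) (hi i) v) (lo i) = u := by
  rw [Function.update_of_ne (lo_ne_hi i i), Function.update_self]

lemma update2_hi (b : Fin (2 * k) → V) (i : Fin k) (u v : V) :
    (Function.update (Function.update b (lo i) u) (hi i) v) (hi i) = v :=
  Function.update_self _ _ _

lemma update2_lo_ne (b : Fin (2 * k) → V) (i : Fin k) (u v : V) {j : Fin k} (hj : j ≠ i) :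
    (Function.update (Function.update b (lo i) u) (hi i) v) (lo j) = b (lo j) := by
  rw [Function.update_of_ne (lo_ne_hi j i), Function.update_of_ne (fun hc => hj (lo_inj hc))]

lemma update2_hi_ne (b : Fin (2 * k) → V) (i : Fin k) (u v : V) {j : Fin k} (hj : j ≠ i) :
    (Function.update (Function.update b (lo i) u) (hi i) v) (hi j) = b (hi j) := by
  rw [Function.update_of_ne (fun hc => hj (hi_inj hc)),
    Function.update_of_ne (Ne.symm (lo_ne_hi i j))]

lemma goodPair_update_inl {a : Fin k → SubdivVerts G 1} {b : Fin (2 * k) → V}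
    (hab : GoodPair G a b) (i : Fin k) (u : V) :
    GoodPair G (Function.update a i (Sum.inl u))
      (Function.update (Function.update b (lo i) u) (hi i) u) := by
  intro j
  by_cases hj : j = i
  · subst hj
    rw [update2_lo, update2_hi, Function.update_self]
    exact Or.inl ⟨rfl, rfl⟩
  · rw [update2_lo_ne _ _ _ _ hj, update2_hi_ne _ _ _ _ hj, Function.update_of_ne hj]
    exact hab j

lemma goodPair_update_edge {a : Fin k → SubdivVerts G 1} {b : Fin (2 * k) → V}
    (hab : GoodPair G a b) (i : Fin k) {u v : V} (h : G.Adj u v) :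
    GoodPair G (Function.update a i (edgeVert (mkEdge h)))
      (Function.update (Function.update b (lo i) u) (hi i) v) := by
  intro j
  by_cases hj : j = i
  · subst hj
    rw [update2_lo, update2_hi, Function.update_self]
    exact Or.inr ⟨h, rfl⟩
  · rw [update2_lo_ne _ _ _ _ hj, update2_hi_ne _ _ _ _ hj, Function.update_of_ne hj]
    exact hab j

lemma one_le_ncard_singleton_cond {α : Type} [Finite α] (u : α) (P : α → Prop) :
    1 ≤ {w | u = w ∧ P w}.ncard ↔ P u := by
  constructor
  · intro h1
    have hne : {w | u = w ∧ P w}.Nonempty := by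
      by_contra hc
      rw [Set.not_nonempty_iff_eq_empty] at hc
      rw [hc] at h1
      simp at h1
    obtain ⟨w, rfl, hw⟩ := hne
    exact hw
  · intro hP
    have h1 : {w | u = w ∧ P w}.Nonempty := ⟨u, rfl, hP⟩
    have h2 : ({u} : Set α) ⊆ {w | u = w ∧ P w} := by
      rintro x rfl
      exact ⟨rfl, hP⟩
    calc 1 = ({u} : Set α).ncard := (Set.ncard_singleton u).symm
    _ ≤ _ := Set.ncard_le_ncard h2 (Set.toFinite _)

end Good
section Main

variable {V : Type} [Fintype V] [LinearOrder V] {k : ℕ}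

lemma diag_count_correct (G : SimpleGraph V) (i : Fin k) (ψ : CFormula (2 * k))
    (b : Fin (2 * k) → V) (P : V → Prop)
    (hψ : ∀ u : V, CSat G ψ (Function.update (Function.update b (lo i) u) (hi i) u) ↔ P u)
    (n1 : ℕ) :
    CSat G (.count n1 (lo i) (.count 1 (hi i) (.and (.eq (lo i) (hi i)) ψ))) b
      ↔ n1 ≤ {u | P u}.ncard := by
  simp only [CSat]
  have hset : {u : V | 1 ≤ {w : V |
        (Function.update (Function.update b (lo i) u) (hi i) w) (lo i)
          = (Function.update (Function.update b (lo i) u) (hi i) w) (hi i)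
        ∧ CSat G ψ (Function.update (Function.update b (lo i) u) (hi i) w)}.ncard}
      = {u | P u} := by
    ext u
    simp only [Set.mem_setOf_eq, update2_lo, update2_hi]
    rw [one_le_ncard_singleton_cond u
      (fun w => CSat G ψ (Function.update (Function.update b (lo i) u) (hi i) w))]
    exact hψ u
  rw [hset]

lemma pairs_count_correct (G : SimpleGraph V) (i : Fin k) (ψ : CFormula (2 * k))
    (b : Fin (2 * k) → V) (m : ℕ) :
    CSat G (trPairs i m ψ) b ↔ m ≤ ∑ u : V, {v : V |
      CSat G ψ (Function.update (Function.update b (lo i) u) (hi i) v)}.ncard := by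
  classical
  rw [sum_count_trick]
  simp only [trPairs]
  rw [csat_FBigOr]
  constructor
  · rintro ⟨χ, hχ, hsat⟩
    simp only [List.mem_map] at hχ
    obtain ⟨aseq, hmem, rfl⟩ := hχ
    rw [mem_seqList] at hmem
    rw [csat_FBigAnd] at hsat
    refine ⟨aseq, hmem, fun t ht => ?_⟩
    have h1 := hsat _ (List.mem_map.2 ⟨t, List.mem_finRange t, rfl⟩)
    rw [if_neg ht] at h1
    simp only [CSat] at h1
    rw [← ncard_setOf_eq_filter_card]
    exact h1
  · rintro ⟨aseq, hmem, hcond⟩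
    refine ⟨_, List.mem_map.2 ⟨aseq, (mem_seqList _).2 hmem, rfl⟩, ?_⟩
    rw [csat_FBigAnd]
    intro χ hχ
    simp only [List.mem_map] at hχ
    obtain ⟨t, -, rfl⟩ := hχ
    by_cases ht : (aseq t : ℕ) = 0
    · rw [if_pos ht]
      exact csat_FTrue _ _ _
    · rw [if_neg ht]
      simp only [CSat]
      have h2 := hcond t ht
      rw [← ncard_setOf_eq_filter_card] at h2
      exact h2

lemma trans_correct (G : SimpleGraph V) (φ : CFormula k) :
    ∀ (a : Fin k → SubdivVerts G 1) (b : Fin (2 * k) → V), GoodPair G a b →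
      (CSat (subdivision G 1) φ a ↔ CSat G (trC φ) b) := by
  induction φ with
  | eq i j =>
    intro a b hab
    simp only [CSat, trC, csat_FOr]
    rcases hab i with ⟨hdi, hai⟩ | ⟨hAi, hai⟩ <;> rcases hab j with ⟨hdj, haj⟩ | ⟨hAj, haj⟩
    · have hinj : (Sum.inl (b (lo i)) : SubdivVerts G 1) = Sum.inl (b (lo j))
          ↔ b (lo i) = b (lo j) := ⟨Sum.inl.inj, fun h => by rw [h]⟩
      rw [hai, haj, hinj]
      tauto
    · have hne := hAj.ne
      have hlhs : a i ≠ a j := by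
        rw [hai, haj]
        simp [edgeVert]
      constructor
      · intro hcon
        exact absurd hcon hlhs
      · intro hcon
        exfalso
        tauto
    · have hne := hAi.ne
      have hlhs : a i ≠ a j := by
        rw [hai, haj]
        simp [edgeVert]
      constructor
      · intro hcon
        exact absurd hcon hlhs
      · intro hcon
        exfalso
        tauto
    · have hnei := hAi.ne
      have hnej := hAj.ne
      have hlhs : (edgeVert (mkEdge hAi) = edgeVert (mkEdge hAj))
          ↔ ((b (lo i) = b (lo j) ∧ b (hi i) = b (hi j))
            ∨ (b (lo i) = b (hi j) ∧ b (hi i) = b (lo j))) :=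
        ⟨fun hc => (mkEdge_eq_mkEdge_iff hAi hAj).1 (edgeVert_injective hc),
         fun hp => congrArg edgeVert ((mkEdge_eq_mkEdge_iff hAi hAj).2 hp)⟩
      rw [hai, haj, hlhs]
      tauto
  | adj i j =>
    intro a b hab
    simp only [CSat, trC, csat_FOr]
    rcases hab i with ⟨hdi, hai⟩ | ⟨hAi, hai⟩ <;> rcases hab j with ⟨hdj, haj⟩ | ⟨hAj, haj⟩
    · have hlhs := subdiv_not_adj_inl_inl (G := G) (b (lo i)) (b (lo j))
      rw [← hai, ← haj] at hlhs
      constructor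
      · intro hcon
        exact absurd hcon hlhs
      · intro hcon
        exfalso
        tauto
    · have hne := hAj.ne
      have hlhs : (subdivision G 1).Adj (a i) (a j)
          ↔ (b (lo i) = b (lo j) ∨ b (lo i) = b (hi j)) := by
        rw [hai, haj, subdiv_adj_inl_edge, mkEdge_endpoints hAj]
      rw [hlhs]
      tauto
    · have hne := hAi.ne
      have hlhs : (subdivision G 1).Adj (a i) (a j)
          ↔ (b (lo j) = b (lo i) ∨ b (lo j) = b (hi i)) := by
        rw [hai, haj, subdiv_adj_edge_inl, mkEdge_endpoints hAi]
      rw [hlhs]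
      tauto
    · have hnei := hAi.ne
      have hnej := hAj.ne
      have hlhs := subdiv_not_adj_edge_edge (mkEdge hAi) (mkEdge hAj)
      rw [← hai, ← haj] at hlhs
      constructor
      · intro hcon
        exact absurd hcon hlhs
      · intro hcon
        exfalso
        tauto
  | not φ ih =>
    intro a b hab
    simp only [CSat, trC]
    rw [ih a b hab]
  | and φ ψ ih1 ih2 =>
    intro a b hab
    simp only [CSat, trC]
    rw [ih1 a b hab, ih2 a b hab]
  | count n i φ ih =>
    intro a b hab
    classical
    simp only [CSat, trC]
    rw [csat_FBigOr]
    set S1 : Set V :=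
      {u | CSat (subdivision G 1) φ (Function.update a i (Sum.inl u))} with hS1
    set S2 : Set (SubEdges G) :=
      {e | CSat (subdivision G 1) φ (Function.update a i (edgeVert e))} with hS2
    have hsplit : {x | CSat (subdivision G 1) φ (Function.update a i x)}.ncard
        = S1.ncard + S2.ncard :=
      ncard_subdiv_split {x | CSat (subdivision G 1) φ (Function.update a i x)}
    have hdiag : ∀ n1 : ℕ,
        CSat G (.count n1 (lo i) (.count 1 (hi i) (.and (.eq (lo i) (hi i)) (trC φ)))) b
          ↔ n1 ≤ S1.ncard := by
      intro n1
      exact diag_count_correct G i (trC φ) b _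
        (fun u => (ih _ _ (goodPair_update_inl hab i u)).symm) n1
    have hpairs : ∀ m : ℕ,
        CSat G (trPairs i m (.and (.adj (lo i) (hi i)) (trC φ))) b ↔ m ≤ 2 * S2.ncard := by
      intro m
      rw [pairs_count_correct]
      have hFeq : ∀ u : V, {v : V | CSat G (.and (.adj (lo i) (hi i)) (trC φ))
            (Function.update (Function.update b (lo i) u) (hi i) v)}
          = {v : V | ∃ h : G.Adj u v,
              CSat (subdivision G 1) φ (Function.update a i (edgeVert (mkEdge h)))} := by
        intro u
        ext v
        simp only [Set.mem_setOf_eq, CSat, update2_lo, update2_hi]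
        constructor
        · rintro ⟨hadj, hs⟩
          exact ⟨hadj, (ih _ _ (goodPair_update_edge hab i hadj)).2 hs⟩
        · rintro ⟨hadj, hs⟩
          exact ⟨hadj, (ih _ _ (goodPair_update_edge hab i hadj)).1 hs⟩
      have hsum : ∑ u : V, {v : V | CSat G (.and (.adj (lo i) (hi i)) (trC φ))
            (Function.update (Function.update b (lo i) u) (hi i) v)}.ncard
          = 2 * S2.ncard := by
        rw [Finset.sum_congr rfl (fun u _ => congrArg Set.ncard (hFeq u))]
        exact sum_ncard_pairs
          (fun e => CSat (subdivision G 1) φ (Function.update a i (edgeVert e)))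
      rw [hsum]
    constructor
    · intro hn
      rw [hsplit] at hn
      refine ⟨_, List.mem_map.2 ⟨min n S1.ncard, List.mem_range.2 (by omega), rfl⟩,
        ⟨(hdiag _).2 (by omega), (hpairs _).2 (by omega)⟩⟩
    · rintro ⟨χ, hχ, hsat⟩
      simp only [List.mem_map, List.mem_range] at hχ
      obtain ⟨n1, hn1, rfl⟩ := hχ
      obtain ⟨h1, h2⟩ := hsat
      rw [hdiag] at h1
      rw [hpairs] at h2
      rw [hsplit]
      omega

end Main
section Final

lemma all_csat_iff_isEmpty {V : Type} [Fintype V] (G : SimpleGraph V) (m : ℕ) (hm : 0 < m) :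
    (∀ a : Fin m → V, CSat G (.not (.count 1 ⟨0, hm⟩ (.eq ⟨0, hm⟩ ⟨0, hm⟩))) a)
      ↔ IsEmpty V := by
  constructor
  · intro hall
    by_contra hne
    rw [not_isEmpty_iff] at hne
    obtain ⟨v0⟩ := hne
    have h1 := hall (fun _ => v0)
    simp only [CSat] at h1
    apply h1
    rw [Set.setOf_true, Set.ncard_univ, Nat.card_eq_fintype_card]
    have : Nonempty V := ⟨v0⟩
    exact Fintype.card_pos
  · intro hV a
    exact (IsEmpty.false (a ⟨0, hm⟩)).elim

theorem cEquiv_one_subdivision_aux {V W : Type} [Fintype V] [LinearOrder V]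
    [Fintype W] [LinearOrder W]
    (G : SimpleGraph V) (H : SimpleGraph W) (k : ℕ) (hk : 1 ≤ k)
    (h : CEquiv G H (2 * k)) :
    CEquiv (subdivision G 1) (subdivision H 1) k := by
  intro φ hfv
  have hk2 : 0 < 2 * k := by omega
  have hempty : IsEmpty V ↔ IsEmpty W := by
    have h1 := h (.not (.count 1 ⟨0, hk2⟩ (.eq ⟨0, hk2⟩ ⟨0, hk2⟩)))
      (by simp [CFormula.freeVars])
    rw [all_csat_iff_isEmpty G _ hk2, all_csat_iff_isEmpty H _ hk2] at h1
    exact h1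
  by_cases hV : Nonempty V
  · have hW : Nonempty W := by
      by_contra hc
      rw [not_nonempty_iff] at hc
      exact (not_isEmpty_iff.2 hV) (hempty.2 hc)
    obtain ⟨v0⟩ := hV
    obtain ⟨w0⟩ := hW
    have hfvT : (trC φ).freeVars = ∅ := by
      have h2 := fv_trans φ
      rw [hfv] at h2
      simpa using h2
    have hmain := h (trC φ) hfvT
    have hGood0 : GoodPair (k := k) G (fun _ => Sum.inl v0) (fun _ => v0) := by
      intro i
      exact Or.inl ⟨rfl, rfl⟩
    have hGoodW : GoodPair (k := k) H (fun _ => Sum.inl w0) (fun _ => w0) := by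
      intro i
      exact Or.inl ⟨rfl, rfl⟩
    have hGiff : (∀ a : Fin k → SubdivVerts G 1, CSat (subdivision G 1) φ a)
        ↔ (∀ b : Fin (2 * k) → V, CSat G (trC φ) b) := by
      constructor
      · intro hall b
        rw [csat_eqOn G (trC φ) b (fun _ => v0)
          (fun i hi => absurd hi (by rw [hfvT]; exact Finset.notMem_empty i))]
        exact (trans_correct G φ _ _ hGood0).1 (hall _)
      · intro hall a
        rw [csat_eqOn (subdivision G 1) φ a (fun _ => Sum.inl v0)
          (fun i hi => absurd hi (by rw [hfv]; exact Finset.notMem_empty i))]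
        exact (trans_correct G φ _ _ hGood0).2 (hall _)
    have hHiff : (∀ a : Fin k → SubdivVerts H 1, CSat (subdivision H 1) φ a)
        ↔ (∀ b : Fin (2 * k) → W, CSat H (trC φ) b) := by
      constructor
      · intro hall b
        rw [csat_eqOn H (trC φ) b (fun _ => w0)
          (fun i hi => absurd hi (by rw [hfvT]; exact Finset.notMem_empty i))]
        exact (trans_correct H φ _ _ hGoodW).1 (hall _)
      · intro hall a
        rw [csat_eqOn (subdivision H 1) φ a (fun _ => Sum.inl w0)
          (fun i hi => absurd hi (by rw [hfv]; exact Finset.notMem_empty i))]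
        exact (trans_correct H φ _ _ hGoodW).2 (hall _)
    rw [hGiff, hHiff]
    exact hmain
  · have hVe : IsEmpty V := not_nonempty_iff.1 hV
    have hWe : IsEmpty W := hempty.1 hVe
    haveI := hVe
    haveI := hWe
    constructor
    · intro _ a
      exact (IsEmpty.false (a ⟨0, hk⟩)).elim
    · intro _ a
      exact (IsEmpty.false (a ⟨0, hk⟩)).elim

end Final
/-- If `G ≡_{C_{2k}} H`, then the 1-subdivisions satisfy `G¹ ≡_{C_k} H¹`. -/
theorem cEquiv_one_subdivision {V W : Type} [Fintype V] [LinearOrder V]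
    [Fintype W] [LinearOrder W]
    (G : SimpleGraph V) (H : SimpleGraph W) (k : ℕ) (hk : 1 ≤ k)
    (h : CEquiv G H (2 * k)) :
    CEquiv (subdivision G 1) (subdivision H 1) k := by
  exact cEquiv_one_subdivision_aux G H k hk h
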